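/- Let α, β be positive integers, x, y complex with |x|<1, |y|<1, and t₁, t₂ complex numbers avoiding the poles. Then Σ over all pairs (X,Y) with X^α = x, Y^β = y of L(X,Y | t₁, t₂) equals Σ_{m,n>0} αβ x^m y^n / ((mα − t₁)(mα + nβ − t₂)). -/

import Mathlib

open Polynomial

/-- `L(x,y | t₁,t₂) = Σ_{m,n>0} x^m y^n / ((m−t₁)(m+n−t₂))`. -/
noncomputable def genL (x y t₁ t₂ : ℂ) : ℂ :=
  ∑' p : ℕ × ℕ, x ^ (p.1 + 1) * y ^ (p.2 + 1) /
    ((((p.1 + 1 : ℕ) : ℂ) - t₁) * (((p.1 + p.2 + 2 : ℕ) : ℂ) - t₂))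

/-- Naturals keep a uniform distance from any fixed complex number they avoid. -/
lemma nat_dist_lower (t : ℂ) : ∃ δ > 0, ∀ m : ℕ, (m : ℂ) ≠ t → δ ≤ ‖(m : ℂ) - t‖ := by
  set N := ⌈‖t‖⌉₊ + 2 with hN
  have hne : (Finset.range N).Nonempty := ⟨0, Finset.mem_range.2 (by omega)⟩
  set δ0 := (Finset.range N).inf' hne
    (fun m => if (m : ℂ) = t then 1 else ‖(m : ℂ) - t‖) with hδ0
  refine ⟨min δ0 1, ?_, ?_⟩
  · refine lt_min ?_ one_pos
    rw [hδ0, Finset.lt_inf'_iff]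
    intro m _
    split
    · exact one_pos
    · next h => exact norm_pos_iff.2 (sub_ne_zero.2 h)
  · intro m hm
    by_cases hmN : m < N
    · refine le_trans (min_le_left _ _) (le_trans (Finset.inf'_le _ (Finset.mem_range.2 hmN)) ?_)
      simp [hm]
    · refine le_trans (min_le_right _ _) ?_
      have h1 : ‖t‖ + 1 ≤ (m : ℝ) := by
        have h2 := Nat.le_ceil ‖t‖
        have h3 : (N : ℝ) ≤ (m : ℝ) := by exact_mod_cast Nat.le_of_not_lt hmN
        have h4 : ((⌈‖t‖⌉₊ : ℝ) + 2 : ℝ) = (N : ℝ) := by rw [hN]; push_cast; ring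
        linarith
      calc (1 : ℝ) ≤ (m : ℝ) - ‖t‖ := by linarith
        _ = ‖(m : ℂ)‖ - ‖t‖ := by rw [Complex.norm_natCast]
        _ ≤ ‖(m : ℂ) - t‖ := norm_sub_norm_le _ _

set_option maxHeartbeats 1000000 in
/-- Summability of the generic term of `genL`. -/
lemma summable_term {X Y : ℂ} (hX : ‖X‖ < 1) (hY : ‖Y‖ < 1) (t₁ t₂ : ℂ) :
    Summable (fun p : ℕ × ℕ => X ^ (p.1 + 1) * Y ^ (p.2 + 1) /
      ((((p.1 + 1 : ℕ) : ℂ) - t₁) * (((p.1 + p.2 + 2 : ℕ) : ℂ) - t₂))) := by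
  obtain ⟨δ₁, hδ₁, hb1⟩ := nat_dist_lower t₁
  obtain ⟨δ₂, hδ₂, hb2⟩ := nat_dist_lower t₂
  have hXs : Summable (fun m : ℕ => δ₁⁻¹ * ‖X‖ ^ (m + 1)) := by
    refine ((summable_geometric_of_lt_one (norm_nonneg X) hX).mul_left
      (δ₁⁻¹ * ‖X‖)).congr ?_
    intro m; rw [pow_succ]; ring
  have hYs : Summable (fun n : ℕ => δ₂⁻¹ * ‖Y‖ ^ (n + 1)) := by
    refine ((summable_geometric_of_lt_one (norm_nonneg Y) hY).mul_left
      (δ₂⁻¹ * ‖Y‖)).congr ?_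
    intro n; rw [pow_succ]; ring
  have hmaj : Summable (fun p : ℕ × ℕ =>
      (δ₁⁻¹ * ‖X‖ ^ (p.1 + 1)) * (δ₂⁻¹ * ‖Y‖ ^ (p.2 + 1))) :=
    Summable.mul_of_nonneg hXs hYs (fun m => by positivity) (fun n => by positivity)
  refine Summable.of_norm_bounded hmaj ?_
  intro p
  by_cases h1 : (((p.1 + 1 : ℕ) : ℂ)) = t₁
  · simp only [h1, sub_self, zero_mul, div_zero, norm_zero]
    positivity
  by_cases h2 : (((p.1 + p.2 + 2 : ℕ) : ℂ)) = t₂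
  · simp only [h2, sub_self, mul_zero, div_zero, norm_zero]
    positivity
  have d1 := hb1 (p.1 + 1) h1
  have d2 := hb2 (p.1 + p.2 + 2) h2
  rw [norm_div, norm_mul, norm_mul, norm_pow, norm_pow]
  have hpos : (0:ℝ) < δ₁ * δ₂ := by positivity
  calc ‖X‖ ^ (p.1 + 1) * ‖Y‖ ^ (p.2 + 1) /
        (‖(((p.1 + 1 : ℕ) : ℂ)) - t₁‖ * ‖(((p.1 + p.2 + 2 : ℕ) : ℂ)) - t₂‖)
      ≤ ‖X‖ ^ (p.1 + 1) * ‖Y‖ ^ (p.2 + 1) / (δ₁ * δ₂) := by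
        gcongr <;> first | positivity | exact d1 | exact d2
    _ = (δ₁⁻¹ * ‖X‖ ^ (p.1 + 1)) * (δ₂⁻¹ * ‖Y‖ ^ (p.2 + 1)) := by
        field_simp

lemma summable_msum {ι : Type*} (s : Multiset ι) (f : ι → ℕ × ℕ → ℂ)
    (h : ∀ X ∈ s, Summable (f X)) :
    Summable (fun p => (s.map (fun X => f X p)).sum) := by
  induction s using Multiset.induction_on with
  | empty => simpa using summable_zero
  | cons a s ih =>
    simp only [Multiset.map_cons, Multiset.sum_cons]
    exact (h a (Multiset.mem_cons_self a s)).add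
      (ih (fun X hX => h X (Multiset.mem_cons_of_mem hX)))

lemma tsum_msum {ι : Type*} (s : Multiset ι) (f : ι → ℕ × ℕ → ℂ)
    (h : ∀ X ∈ s, Summable (f X)) :
    (s.map (fun X => ∑' p, f X p)).sum = ∑' p, (s.map (fun X => f X p)).sum := by
  induction s using Multiset.induction_on with
  | empty => simp
  | cons a s ih =>
    simp only [Multiset.map_cons, Multiset.sum_cons]
    rw [ih (fun X hX => h X (Multiset.mem_cons_of_mem hX)),
      ← Summable.tsum_add (h a (Multiset.mem_cons_self a s))
        (summable_msum s f (fun X hX => h X (Multiset.mem_cons_of_mem hX)))]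

/-- Power sums of the multiset of `n`-th roots of `x` in `ℂ`. -/
lemma sum_pow_nthRoots (n : ℕ) (hn : 0 < n) (x : ℂ) (m : ℕ) :
    ((nthRoots n x).map (· ^ m)).sum = if n ∣ m then (n : ℂ) * x ^ (m / n) else 0 := by
  obtain ⟨z, hz⟩ := IsAlgClosed.exists_pow_nat_eq x hn
  have hζ := Complex.isPrimitiveRoot_exp n hn.ne'
  set ζ := Complex.exp (2 * Real.pi * Complex.I / n) with hζdef
  rw [hζ.nthRoots_eq hz, Multiset.map_map]
  have hms : ((Multiset.range n).map ((· ^ m) ∘ fun k => ζ ^ k * z)).sum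
      = ∑ k ∈ Finset.range n, (ζ ^ k * z) ^ m := rfl
  rw [hms]
  have hterm : ∀ k, (ζ ^ k * z) ^ m = z ^ m * (ζ ^ m) ^ k := by
    intro k
    rw [mul_pow, ← pow_mul, mul_comm k m, pow_mul]
    ring
  simp only [hterm]
  rw [← Finset.mul_sum]
  by_cases hdvd : n ∣ m
  · rw [if_pos hdvd]
    have h1 : ζ ^ m = 1 := (hζ.pow_eq_one_iff_dvd m).2 hdvd
    rw [h1]
    simp only [one_pow, Finset.sum_const, Finset.card_range, nsmul_eq_mul, mul_one]
    obtain ⟨c, rfl⟩ := hdvd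
    rw [Nat.mul_div_cancel_left c hn, pow_mul, hz]
    ring
  · rw [if_neg hdvd]
    have h1 : ζ ^ m ≠ 1 := fun h => hdvd ((hζ.pow_eq_one_iff_dvd m).1 h)
    rw [geom_sum_eq h1]
    have h2 : (ζ ^ m) ^ n = 1 := by
      rw [← pow_mul, mul_comm m n, pow_mul, hζ.pow_eq_one, one_pow]
    rw [h2, sub_self, zero_div, mul_zero]

/-- Summing `L(X,Y | t₁,t₂)` over all pairs of roots `X^α = x`, `Y^β = y` gives
`Σ_{m,n>0} αβ x^m y^n / ((mα − t₁)(mα + nβ − t₂))`. -/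
theorem root_sum_genL (α β : ℕ) (hα : 0 < α) (hβ : 0 < β) (x y t₁ t₂ : ℂ)
    (hx : ‖x‖ < 1) (hy : ‖y‖ < 1)
    (h1 : ∀ m : ℕ+, (((m : ℕ) * α : ℕ) : ℂ) ≠ t₁)
    (h2 : ∀ m n : ℕ+, (((m : ℕ) * α + (n : ℕ) * β : ℕ) : ℂ) ≠ t₂) :
    ((nthRoots α x).map (fun X =>
      ((nthRoots β y).map (fun Y => genL X Y t₁ t₂)).sum)).sum
    = ∑' p : ℕ × ℕ, (α : ℂ) * (β : ℂ) * x ^ (p.1 + 1) * y ^ (p.2 + 1) /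
        (((((p.1 + 1) * α : ℕ) : ℂ) - t₁) *
          ((((p.1 + 1) * α + (p.2 + 1) * β : ℕ) : ℂ) - t₂)) := by
  -- the generic term
  set f : ℂ → ℂ → ℕ × ℕ → ℂ := fun X Y p => X ^ (p.1 + 1) * Y ^ (p.2 + 1) /
    ((((p.1 + 1 : ℕ) : ℂ) - t₁) * (((p.1 + p.2 + 2 : ℕ) : ℂ) - t₂)) with hf
  -- roots have norm < 1
  have hroot : ∀ {n : ℕ}, 0 < n → ∀ {w X : ℂ}, ‖w‖ < 1 → X ∈ nthRoots n w → ‖X‖ < 1 := by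
    intro n hn w X hw hX
    rw [mem_nthRoots hn] at hX
    by_contra hge
    push_neg at hge
    have hpow : (1:ℝ) ≤ ‖X‖ ^ n := by
      calc (1:ℝ) = 1 ^ n := (one_pow n).symm
        _ ≤ ‖X‖ ^ n := pow_le_pow_left₀ zero_le_one hge n
    rw [← norm_pow, hX] at hpow
    exact absurd hpow (not_le.2 hw)
  -- Step 1: push the multiset sums inside the tsum
  have step1 : ((nthRoots α x).map (fun X =>
      ((nthRoots β y).map (fun Y => genL X Y t₁ t₂)).sum)).sum
      = ∑' p : ℕ × ℕ, ((nthRoots α x).map (fun X =>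
          ((nthRoots β y).map (fun Y => f X Y p)).sum)).sum := by
    have inner : ∀ X ∈ nthRoots α x,
        ((nthRoots β y).map (fun Y => genL X Y t₁ t₂)).sum
        = ∑' p, ((nthRoots β y).map (fun Y => f X Y p)).sum := by
      intro X hX
      have hXn := hroot hα hx hX
      exact tsum_msum _ _ (fun Y hY => summable_term hXn (hroot hβ hy hY) t₁ t₂)
    rw [Multiset.map_congr rfl inner]
    exact tsum_msum _ _ (fun X hX => summable_msum _ _
      (fun Y hY => summable_term (hroot hα hx hX) (hroot hβ hy hY) t₁ t₂))
  rw [step1]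
  -- Step 2: compute the inner double sum pointwise
  have step2 : ∀ p : ℕ × ℕ, ((nthRoots α x).map (fun X =>
      ((nthRoots β y).map (fun Y => f X Y p)).sum)).sum
      = (if α ∣ p.1 + 1 then (α : ℂ) * x ^ ((p.1 + 1) / α) else 0) *
        (if β ∣ p.2 + 1 then (β : ℂ) * y ^ ((p.2 + 1) / β) else 0) /
        ((((p.1 + 1 : ℕ) : ℂ) - t₁) * (((p.1 + p.2 + 2 : ℕ) : ℂ) - t₂)) := by
    intro p
    set D : ℂ := (((p.1 + 1 : ℕ) : ℂ) - t₁) * (((p.1 + p.2 + 2 : ℕ) : ℂ) - t₂) with hD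
    have inner : ∀ X : ℂ, ((nthRoots β y).map (fun Y => f X Y p)).sum
        = (X ^ (p.1 + 1) / D) * ((nthRoots β y).map (· ^ (p.2 + 1))).sum := by
      intro X
      rw [← Multiset.sum_map_mul_left]
      refine congrArg Multiset.sum (Multiset.map_congr rfl ?_)
      intro Y _
      simp only [hf]
      ring
    rw [Multiset.map_congr rfl (fun X _ => inner X)]
    have outer : ∀ X : ℂ, (X ^ (p.1 + 1) / D) * ((nthRoots β y).map (· ^ (p.2 + 1))).sum
        = (((nthRoots β y).map (· ^ (p.2 + 1))).sum / D) * X ^ (p.1 + 1) := by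
      intro X; ring
    rw [Multiset.map_congr rfl (fun X _ => outer X), Multiset.sum_map_mul_left,
      sum_pow_nthRoots α hα x (p.1 + 1), sum_pow_nthRoots β hβ y (p.2 + 1)]
    ring
  rw [tsum_congr step2]
  -- Step 3: reindex
  set g : ℕ × ℕ → ℂ := fun p =>
      (if α ∣ p.1 + 1 then (α : ℂ) * x ^ ((p.1 + 1) / α) else 0) *
      (if β ∣ p.2 + 1 then (β : ℂ) * y ^ ((p.2 + 1) / β) else 0) /
      ((((p.1 + 1 : ℕ) : ℂ) - t₁) * (((p.1 + p.2 + 2 : ℕ) : ℂ) - t₂)) with hg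
  set r : ℕ × ℕ → ℂ := fun q => (α : ℂ) * (β : ℂ) * x ^ (q.1 + 1) * y ^ (q.2 + 1) /
        (((((q.1 + 1) * α : ℕ) : ℂ) - t₁) *
          ((((q.1 + 1) * α + (q.2 + 1) * β : ℕ) : ℂ) - t₂)) with hr
  have key : ∀ q : ℕ × ℕ, g ((q.1 + 1) * α - 1, (q.2 + 1) * β - 1) = r q := by
    intro q
    have e1 : (q.1 + 1) * α - 1 + 1 = (q.1 + 1) * α :=
      Nat.succ_pred_eq_of_pos (Nat.mul_pos (Nat.succ_pos _) hα)
    have e2 : (q.2 + 1) * β - 1 + 1 = (q.2 + 1) * β :=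
      Nat.succ_pred_eq_of_pos (Nat.mul_pos (Nat.succ_pos _) hβ)
    have e3 : ((q.1 + 1) * α - 1) + ((q.2 + 1) * β - 1) + 2
        = (q.1 + 1) * α + (q.2 + 1) * β := by omega
    simp only [hg, hr, e1, e2, e3]
    rw [if_pos (dvd_mul_left α (q.1 + 1)), if_pos (dvd_mul_left β (q.2 + 1)),
      Nat.mul_div_cancel _ hα, Nat.mul_div_cancel _ hβ]
    push_cast
    ring
  refine tsum_eq_tsum_of_ne_zero_bij
    (fun q => ((q.1.1 + 1) * α - 1, (q.1.2 + 1) * β - 1)) ?_ ?_ (fun q => key q.1)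
  · intro q q' h
    have h1 : (q.1.1 + 1) * α - 1 = (q'.1.1 + 1) * α - 1 := congrArg Prod.fst h
    have h2 : (q.1.2 + 1) * β - 1 = (q'.1.2 + 1) * β - 1 := congrArg Prod.snd h
    have e1 : (q.1.1 + 1) * α = (q'.1.1 + 1) * α := by
      have hp : 0 < (q.1.1 + 1) * α := Nat.mul_pos (Nat.succ_pos _) hα
      have hp' : 0 < (q'.1.1 + 1) * α := Nat.mul_pos (Nat.succ_pos _) hα
      generalize hA : (q.1.1 + 1) * α = A at h1 hp
      generalize hB : (q'.1.1 + 1) * α = B at h1 hp'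
      omega
    have e2 : (q.1.2 + 1) * β = (q'.1.2 + 1) * β := by
      have hp : 0 < (q.1.2 + 1) * β := Nat.mul_pos (Nat.succ_pos _) hβ
      have hp' : 0 < (q'.1.2 + 1) * β := Nat.mul_pos (Nat.succ_pos _) hβ
      generalize hA : (q.1.2 + 1) * β = A at h2 hp
      generalize hB : (q'.1.2 + 1) * β = B at h2 hp'
      omega
    have := Nat.eq_of_mul_eq_mul_right hα e1
    have := Nat.eq_of_mul_eq_mul_right hβ e2
    exact Subtype.ext (Prod.ext (by omega) (by omega))
  · intro p hp
    have hd1 : α ∣ p.1 + 1 := by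
      by_contra hc
      apply hp
      simp only [hg, if_neg hc, zero_mul, zero_div]
    have hd2 : β ∣ p.2 + 1 := by
      by_contra hc
      apply hp
      simp only [hg, if_neg hc, mul_zero, zero_div]
    obtain ⟨a, ha⟩ := hd1
    obtain ⟨b, hb⟩ := hd2
    have ha0 : 0 < a := by
      rcases Nat.eq_zero_or_pos a with h | h
      · rw [h, mul_zero] at ha; omega
      · exact h
    have hb0 : 0 < b := by
      rcases Nat.eq_zero_or_pos b with h | h
      · rw [h, mul_zero] at hb; omega
      · exact h
    have ha1 : a - 1 + 1 = a := by omega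
    have hb1 : b - 1 + 1 = b := by omega
    have hip : ((a - 1 + 1) * α - 1, (b - 1 + 1) * β - 1) = p := by
      rw [ha1, hb1, mul_comm a α, mul_comm b β, ← ha, ← hb]
      simp
    have hrq : r (a - 1, b - 1) ≠ 0 := by
      rw [← key (a - 1, b - 1)]
      simpa only [hip, Function.mem_support] using hp
    exact ⟨⟨(a - 1, b - 1), hrq⟩, hip⟩
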